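/- Let n ≥ 2. Identify the F_2-vector space V_n with the power set of {1,…,n} under symmetric difference, and let W_n := V_n / {∅, {1,…,n}} be the quotient by the subgroup generated by the full set. The symmetric group S_n acts on W_n by permuting elements. Then every 1-cocycle ξ : S_n → W_n whose restriction to each subgroup generated by an adjacent transposition (t, t+1) is a coboundary is itself a coboundary; equivalently, H^1_*(S_n, W_n) = 0 where * denotes classes trivial on all cyclic subgroups. -/

import Mathlib

private lemma z2_sub_eq_add : ∀ x y : ZMod 2, x - y = x + y := by decide

private lemma z2_sub_comm : ∀ x y : ZMod 2, x - y = y - x := by decide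

/-- `W_n` is the F₂-space of subsets of `{1,…,n}` (encoded as `Fin n → ZMod 2`)
modulo the span `U` of the full set. Every 1-cocycle `ξ : S_n → W_n` (encoded as a map to
`Fin n → ZMod 2` satisfying the cocycle identity modulo `U`) whose restriction to each
subgroup generated by an adjacent transposition is a coboundary is itself a coboundary. -/
theorem stmt_1 (n : ℕ) (hn : 2 ≤ n)
    (U : Submodule (ZMod 2) (Fin n → ZMod 2))
    (hU : U = Submodule.span (ZMod 2) {(fun _ => 1 : Fin n → ZMod 2)})
    (ξ : Equiv.Perm (Fin n) → (Fin n → ZMod 2))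
    (hcoc : ∀ g h : Equiv.Perm (Fin n),
      ξ (g * h) - ((fun i => ξ h (g⁻¹ i)) + ξ g) ∈ U)
    (hloc : ∀ (a : ℕ) (ha : a + 1 < n), ∃ m : Fin n → ZMod 2,
      ∀ x ∈ Subgroup.zpowers
          (Equiv.swap (⟨a, Nat.lt_of_succ_lt ha⟩ : Fin n) (⟨a + 1, ha⟩ : Fin n)),
        ξ x - ((fun i => m (x⁻¹ i)) - m) ∈ U) :
    ∃ m : Fin n → ZMod 2, ∀ g : Equiv.Perm (Fin n),
      ξ g - ((fun i => m (g⁻¹ i)) - m) ∈ U := by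
  classical
  obtain ⟨k, rfl⟩ : ∃ k, n = k + 1 := ⟨n - 1, by omega⟩
  choose ma hma using hloc
  -- ε a is the "jump" prescribed by the local coboundary data at position a
  set ε : ℕ → ZMod 2 := fun a =>
    if h : a + 1 < k + 1 then
      ma a h ⟨a, Nat.lt_of_succ_lt h⟩ + ma a h ⟨a + 1, h⟩ else 0 with hε
  set μ : ℕ → ZMod 2 := fun a => ∑ j ∈ Finset.range a, ε j with hμ
  -- the candidate global potential
  set m : Fin (k + 1) → ZMod 2 := fun i => μ i.val with hm
  -- the exact coboundary of m
  set δ : Equiv.Perm (Fin (k + 1)) → (Fin (k + 1) → ZMod 2) :=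
    fun g => (fun i => m (g⁻¹ i)) - m with hδ
  refine ⟨m, ?_⟩
  -- U is stable under precomposition with permutations
  have hUcomp : ∀ (g : Equiv.Perm (Fin (k + 1))) (v : Fin (k + 1) → ZMod 2),
      v ∈ U → (fun i => v (g i)) ∈ U := by
    intro g v hv
    rw [hU, Submodule.mem_span_singleton] at hv ⊢
    obtain ⟨c, rfl⟩ := hv
    exact ⟨c, rfl⟩
  -- ξ 1 ∈ U
  have hone : ξ 1 ∈ U := by
    have h11 := hcoc 1 1
    rw [mul_one] at h11
    have : ξ 1 - ((fun i => ξ 1 ((1 : Equiv.Perm (Fin (k+1)))⁻¹ i)) + ξ 1) = -ξ 1 := by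
      funext i; simp only [inv_one, Equiv.Perm.one_apply, Pi.sub_apply, Pi.add_apply, Pi.neg_apply]; ring
    rw [this] at h11
    simpa using U.neg_mem h11
  -- δ 1 = 0
  have hδ1 : δ 1 = 0 := by
    funext i; simp only [hδ, inv_one, Equiv.Perm.one_apply, Pi.sub_apply, sub_self, Pi.zero_apply]
  -- cocycle identity for the coboundary δ, hence the statement is multiplicative
  have hmul : ∀ g h : Equiv.Perm (Fin (k + 1)),
      ξ g - δ g ∈ U → ξ h - δ h ∈ U → ξ (g * h) - δ (g * h) ∈ U := by
    intro g h hg hh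
    have key : ξ (g * h) - δ (g * h) =
        (ξ (g * h) - ((fun i => ξ h (g⁻¹ i)) + ξ g)) +
          ((fun i => (ξ h - δ h) (g⁻¹ i)) + (ξ g - δ g)) := by
      funext i
      simp only [hδ, Pi.sub_apply, Pi.add_apply, mul_inv_rev, Equiv.Perm.mul_apply]
      ring
    rw [key]
    exact U.add_mem (hcoc g h) (U.add_mem (hUcomp g⁻¹ _ hh) hg)
  -- the statement holds on adjacent transpositions
  have hgen : ∀ i : Fin k,
      ξ (Equiv.swap i.castSucc i.succ) - δ (Equiv.swap i.castSucc i.succ) ∈ U := by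
    intro i
    have ha : i.val + 1 < k + 1 := Nat.succ_lt_succ i.isLt
    have hsw : Equiv.swap i.castSucc i.succ =
        Equiv.swap (⟨i.val, Nat.lt_of_succ_lt ha⟩ : Fin (k + 1)) (⟨i.val + 1, ha⟩) := by
      congr 1
    set s : Equiv.Perm (Fin (k + 1)) :=
      Equiv.swap (⟨i.val, Nat.lt_of_succ_lt ha⟩ : Fin (k + 1)) (⟨i.val + 1, ha⟩) with hs
    have spec := hma i.val ha s (Subgroup.mem_zpowers _)
    have hδs : δ s = (fun j => ma i.val ha (s⁻¹ j)) - ma i.val ha := by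
      have hεa : ε i.val = ma i.val ha ⟨i.val, Nat.lt_of_succ_lt ha⟩ + ma i.val ha ⟨i.val + 1, ha⟩ := by
        simp only [hε]; rw [dif_pos ha]
      funext j
      have hsinv : s⁻¹ = s := Equiv.swap_inv _ _
      simp only [hδ, hm, Pi.sub_apply, hsinv]
      by_cases hj1 : j = (⟨i.val, Nat.lt_of_succ_lt ha⟩ : Fin (k + 1))
      · subst hj1
        rw [hs, Equiv.swap_apply_left]
        show μ (i.val + 1) - μ i.val = _
        rw [hμ]
        simp only [Finset.sum_range_succ]
        rw [add_sub_cancel_left, hεa, z2_sub_eq_add _ _, add_comm]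
      · by_cases hj2 : j = (⟨i.val + 1, ha⟩ : Fin (k + 1))
        · subst hj2
          rw [hs, Equiv.swap_apply_right]
          show μ i.val - μ (i.val + 1) = _
          rw [z2_sub_comm _ _, z2_sub_comm _ (ma i.val ha _)]
          rw [hμ]
          simp only [Finset.sum_range_succ]
          rw [add_sub_cancel_left, hεa, z2_sub_eq_add _ _, add_comm]
        · rw [hs, Equiv.swap_apply_of_ne_of_ne hj1 hj2, sub_self, sub_self]
    rw [hsw, hδs]
    exact spec
  -- now induct over the monoid closure of adjacent transpositions
  intro g
  have hg : g ∈ Submonoid.closure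
      (Set.range fun i : Fin k => Equiv.swap i.castSucc i.succ) := by
    rw [Equiv.Perm.mclosure_swap_castSucc_succ k]; trivial
  have : ξ g - δ g ∈ U := by
    induction hg using Submonoid.closure_induction with
    | mem x hx => obtain ⟨i, rfl⟩ := hx; exact hgen i
    | one => rw [hδ1, sub_zero]; exact hone
    | mul x y hx hy ihx ihy => exact hmul x y ihx ihy
  simpa [hδ] using this
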